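/- Let d ≥ 1, let D, G > 0, and let U ⊆ ℝ^d satisfy ‖u − v‖ ≤ D for all u, v ∈ U. Let η_1,…,η_m ∈ (0, 2/(3DG)] be learning rates with prior weights π^1,…,π^m > 0 summing to 1. For each round t = 1,…,T let w_t^1,…,w_t^m ∈ U be arbitrary slave predictions and let g_t ∈ ℝ^d satisfy ‖g_t‖ ≤ G. Define the surrogate loss ℓ_t^η(u) = −η⟨w_t − u, g_t⟩ + η²(⟨u − w_t, g_t⟩)², the cumulative slave losses L_t^j = Σ_{s=1}^t ℓ_s^{η_j}(w_s^j) (with L_0^j = 0), the master prediction w_t = (Σ_{j=1}^m π^j·e^{−L_{t−1}^j}·η_j·w_t^j) / (Σ_{j=1}^m π^j·e^{−L_{t−1}^j}·η_j), and the potential Φ_t = Σ_{j=1}^m π^j·e^{−L_t^j}. Then 1 = Φ_0 ≥ Φ_1 ≥ … ≥ Φ_T. -/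

import Mathlib

open scoped RealInnerProductSpace

lemma exp_key {x : ℝ} (h1 : -(2/3) ≤ x) (h2 : x ≤ 2/3) : Real.exp (x - x^2) ≤ 1 + x := by
  have h1x : (0:ℝ) < 1 + x := by linarith
  rcases le_or_gt 0 x with hx | hx
  · have hu : x - x^2 ≤ x/(1+x) := by
      rw [le_div_iff₀ h1x]; nlinarith
    have h2' : Real.exp (x/(1+x)) ≤ 1 + x := by
      have h3 := Real.add_one_le_exp (-(x/(1+x)))
      rw [Real.exp_neg] at h3
      have h4 : 1/(1+x) ≤ (Real.exp (x/(1+x)))⁻¹ := by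
        have : -(x/(1+x)) + 1 = 1/(1+x) := by field_simp; ring
        linarith
      rw [one_div] at h4
      exact (inv_le_inv₀ (by positivity) (Real.exp_pos _)).mp h4
    exact le_trans (Real.exp_le_exp.2 hu) h2'
  · have hz : 0 ≤ x^2 - x := by nlinarith
    have ht := Real.sum_le_exp_of_nonneg hz 5
    have hs : (1 : ℝ) + (x^2-x) + (x^2-x)^2/2 + (x^2-x)^3/6 + (x^2-x)^4/24 ≤ Real.exp (x^2-x) := by
      have : ∑ i ∈ Finset.range 5, (x^2-x) ^ i / (Nat.factorial i) =
          (1 : ℝ) + (x^2-x) + (x^2-x)^2/2 + (x^2-x)^3/6 + (x^2-x)^4/24 := by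
        simp [Finset.sum_range_succ, Nat.factorial]
      linarith [this ▸ ht]
    have hpoly : 1 ≤ (1+x) * ((1 : ℝ) + (x^2-x) + (x^2-x)^2/2 + (x^2-x)^3/6 + (x^2-x)^4/24) := by
      nlinarith [sq_nonneg x, sq_nonneg (x + 2/3), sq_nonneg (x*(x+2/3)), sq_nonneg (x^2*(x+2/3)), sq_nonneg (x^3*(x+2/3))]
    have hfin : 1 ≤ (1+x) * Real.exp (x^2-x) :=
      le_trans hpoly (mul_le_mul_of_nonneg_left hs (le_of_lt h1x))
    rw [show x - x^2 = -(x^2-x) by ring, Real.exp_neg, ← one_div,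
      div_le_iff₀ (Real.exp_pos _)]
    linarith


/-- Lemma 4 of the paper (Master combines slaves, full version, α = 1): the potential
`Φ_t = Σ_j π^j·exp(−L_t^j)` of the tilted exponentially weighted average master satisfies
`1 = Φ_0 ≥ Φ_1 ≥ … ≥ Φ_T`. -/
theorem stmt_5 {d m T : ℕ} (hd : 1 ≤ d)
    (D G : ℝ) (hD : 0 < D) (hG : 0 < G)
    (U : Set (EuclideanSpace ℝ (Fin d))) (hUconv : Convex ℝ U)
    (hdiam : ∀ u ∈ U, ∀ v ∈ U, ‖u - v‖ ≤ D)
    (η : Fin m → ℝ) (hη : ∀ j, η j ∈ Set.Ioc (0 : ℝ) (2 / (3 * D * G)))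
    (π : Fin m → ℝ) (hπ : ∀ j, 0 < π j) (hπsum : ∑ j, π j = 1)
    -- slave predictions and gradients for rounds 1,…,T
    (ws : ℕ → Fin m → EuclideanSpace ℝ (Fin d))
    (hws : ∀ t, 1 ≤ t → t ≤ T → ∀ j, ws t j ∈ U)
    (g : ℕ → EuclideanSpace ℝ (Fin d)) (hg : ∀ t, 1 ≤ t → t ≤ T → ‖g t‖ ≤ G)
    -- master predictions
    (w : ℕ → EuclideanSpace ℝ (Fin d))
    -- the surrogate loss ℓ_t^η(u) = −η⟨w_t − u, g_t⟩ + η²⟨u − w_t, g_t⟩²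
    (ℓ : ℕ → ℝ → EuclideanSpace ℝ (Fin d) → ℝ)
    (hℓ : ∀ t e u, ℓ t e u = -e * ⟪w t - u, g t⟫ + e ^ 2 * ⟪u - w t, g t⟫ ^ 2)
    -- cumulative slave losses L_t^j = Σ_{s=1}^t ℓ_s^{η_j}(w_s^j)
    (L : ℕ → Fin m → ℝ)
    (hL : ∀ t j, L t j = ∑ s ∈ Finset.Icc 1 t, ℓ s (η j) (ws s j))
    -- master prediction: tilted exponentially weighted average of the slaves
    (hw : ∀ t, 1 ≤ t → t ≤ T →
      w t = (∑ j, π j * Real.exp (-(L (t - 1) j)) * η j)⁻¹ •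
        ∑ j, (π j * Real.exp (-(L (t - 1) j)) * η j) • ws t j)
    -- the potential
    (Φ : ℕ → ℝ) (hΦ : ∀ t, Φ t = ∑ j, π j * Real.exp (-(L t j))) :
    Φ 0 = 1 ∧ ∀ t, t < T → Φ (t + 1) ≤ Φ t := by
  have hL0 : ∀ j, L 0 j = 0 := fun j => by rw [hL]; simp
  constructor
  · rw [hΦ]
    simp only [hL0, neg_zero, Real.exp_zero, mul_one]
    exact hπsum
  intro t ht
  -- m is positive
  have hm : Nonempty (Fin m) := by
    rcases Nat.eq_zero_or_pos m with hm0 | hm0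
    · exfalso; subst hm0; simp at hπsum
    · exact ⟨⟨0, hm0⟩⟩
  have hs1 : 1 ≤ t + 1 := by omega
  have hsT : t + 1 ≤ T := ht
  set c : Fin m → ℝ := fun j => π j * Real.exp (-(L t j)) * η j with hcdef
  have hcpos : ∀ j, 0 < c j := fun j =>
    mul_pos (mul_pos (hπ j) (Real.exp_pos _)) (hη j).1
  have hS : 0 < ∑ j, c j :=
    Finset.sum_pos (fun j _ => hcpos j) Finset.univ_nonempty
  have hweq : w (t+1) = (∑ j, c j)⁻¹ • ∑ j, c j • ws (t+1) j := by
    have := hw (t+1) hs1 hsT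
    simpa only [Nat.add_sub_cancel] using this
  -- master prediction is in U
  have hwU : w (t+1) ∈ U := by
    rw [hweq, Finset.smul_sum]
    simp only [smul_smul]
    refine hUconv.sum_mem (fun j _ => ?_) ?_ (fun j _ => hws (t+1) hs1 hsT j)
    · exact mul_nonneg (inv_nonneg.2 hS.le) (hcpos j).le
    · rw [← Finset.mul_sum, inv_mul_cancel₀ (ne_of_gt hS)]
  -- zero-sum identity
  have hwv : (∑ j, c j) • w (t+1) = ∑ j, c j • ws (t+1) j := by
    rw [hweq, smul_smul, mul_inv_cancel₀ (ne_of_gt hS), one_smul]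
  have hzero : ∑ j, c j * ⟪w (t+1) - ws (t+1) j, g (t+1)⟫ = 0 := by
    have expand : ∀ j : Fin m, c j * ⟪w (t+1) - ws (t+1) j, g (t+1)⟫ =
        c j * ⟪w (t+1), g (t+1)⟫ - ⟪c j • ws (t+1) j, g (t+1)⟫ := fun j => by
      rw [inner_sub_left, real_inner_smul_left]; ring
    rw [Finset.sum_congr rfl (fun j _ => expand j), Finset.sum_sub_distrib,
      ← Finset.sum_mul, ← sum_inner, ← hwv, real_inner_smul_left]
    ring
  -- per-slave inequality
  have hstep : ∀ j : Fin m, π j * Real.exp (-(L (t+1) j)) ≤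
      π j * Real.exp (-(L t j)) + c j * ⟪w (t+1) - ws (t+1) j, g (t+1)⟫ := by
    intro j
    set b : ℝ := ⟪w (t+1) - ws (t+1) j, g (t+1)⟫ with hbdef
    have hb : |b| ≤ D * G := by
      calc |b| ≤ ‖w (t+1) - ws (t+1) j‖ * ‖g (t+1)‖ := abs_real_inner_le_norm _ _
        _ ≤ D * G :=
          mul_le_mul (hdiam _ hwU _ (hws _ hs1 hsT j)) (hg _ hs1 hsT)
            (norm_nonneg _) (le_of_lt hD)
    have hxb : |η j * b| ≤ 2/3 := by
      rw [abs_mul, abs_of_pos (hη j).1]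
      calc η j * |b| ≤ (2 / (3 * D * G)) * (D * G) :=
            mul_le_mul (hη j).2 hb (abs_nonneg _) (by positivity)
        _ = 2/3 := by field_simp
    have hxb' := abs_le.1 hxb
    have hexp : Real.exp (η j * b - (η j * b)^2) ≤ 1 + η j * b :=
      exp_key (by linarith [hxb'.1]) hxb'.2
    have hLsucc : L (t+1) j = L t j + ℓ (t+1) (η j) (ws (t+1) j) := by
      rw [hL, hL, Finset.sum_Icc_succ_top (by omega : 1 ≤ t + 1)]
    have hℓeq : -(ℓ (t+1) (η j) (ws (t+1) j)) = η j * b - (η j * b)^2 := by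
      rw [hℓ]
      have hflip : ⟪ws (t+1) j - w (t+1), g (t+1)⟫ = -b := by
        rw [hbdef, ← inner_neg_left, neg_sub]
      rw [hflip, hbdef]
      ring
    have key : Real.exp (-(L (t+1) j)) ≤ Real.exp (-(L t j)) * (1 + η j * b) := by
      rw [hLsucc, neg_add, Real.exp_add, hℓeq]
      exact mul_le_mul_of_nonneg_left hexp (le_of_lt (Real.exp_pos _))
    calc π j * Real.exp (-(L (t+1) j))
        ≤ π j * (Real.exp (-(L t j)) * (1 + η j * b)) :=
          mul_le_mul_of_nonneg_left key (le_of_lt (hπ j))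
      _ = π j * Real.exp (-(L t j)) + c j * b := by
          rw [hcdef]; ring
  rw [hΦ (t+1), hΦ t]
  calc ∑ j, π j * Real.exp (-(L (t+1) j))
      ≤ ∑ j, (π j * Real.exp (-(L t j)) + c j * ⟪w (t+1) - ws (t+1) j, g (t+1)⟫) :=
        Finset.sum_le_sum (fun j _ => hstep j)
    _ = ∑ j, π j * Real.exp (-(L t j)) := by
        rw [Finset.sum_add_distrib, hzero, add_zero]
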